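/- Let p^m be a prime power. Then Σ_{0<a<p^m/3} Σ_{0<k<(p^m−3a)/2, gcd(a,k,p^m)=1} k = Σ_{0<a<p^m/3} Σ_{0<k<(p^m−3a)/2} k − p·Σ_{0<a<p^{m−1}/3} Σ_{0<k<(p^{m−1}−3a)/2} k. -/
import Mathlib


open Finset

/-- `Ik k L M = Σ t^k` over integers `0 < t < M/2` with `gcd(t, L) = 1`. -/
def Ik (k L M : ℕ) : ℕ :=
  ∑ t ∈ (Finset.range M).filter (fun t => 0 < t ∧ 2 * t < M ∧ Nat.gcd t L = 1), t ^ k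

/-- `Jk k L M = Σ u^k` over integers `0 < u < M/2` with `gcd(u, L) = 1` and `u ≡ -M (mod 3)`. -/
def Jk (k L M : ℕ) : ℕ :=
  ∑ t ∈ (Finset.range M).filter
    (fun t => 0 < t ∧ 2 * t < M ∧ Nat.gcd t L = 1 ∧ (t + M) % 3 = 0), t ^ k

/-- The radical of `n`: the product of the distinct prime divisors of `n`. -/
def rad (n : ℕ) : ℕ := ∏ p ∈ n.primeFactors, p

lemma aux_inner_sum (p q b : ℕ) (hp : 0 < p) :
    ∑ k ∈ (range (p * q)).filter
      (fun k => (0 < k ∧ 2 * k < p * q - 3 * (p * b)) ∧ p ∣ k), (k : ℤ)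
    = p * ∑ k ∈ (range q).filter (fun k => 0 < k ∧ 2 * k < q - 3 * b), (k : ℤ) := by
  have himg : (range (p * q)).filter
      (fun k => (0 < k ∧ 2 * k < p * q - 3 * (p * b)) ∧ p ∣ k)
      = ((range q).filter (fun k => 0 < k ∧ 2 * k < q - 3 * b)).image (fun k => p * k) := by
    ext k
    simp only [mem_image, mem_filter, mem_range]
    constructor
    · rintro ⟨hkq, ⟨hk0, hk2⟩, c, rfl⟩
      refine ⟨c, ⟨lt_of_mul_lt_mul_left hkq (le_of_lt hp), ?_, ?_⟩, rfl⟩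
      · rcases Nat.eq_zero_or_pos c with h | h
        · simp [h] at hk0
        · exact h
      · have h1 : p * (2 * c) < p * (q - 3 * b) := by
          rw [Nat.mul_sub]
          calc p * (2 * c) = 2 * (p * c) := by ring
          _ < p * q - 3 * (p * b) := hk2
          _ = p * q - p * (3 * b) := by ring_nf
        exact lt_of_mul_lt_mul_left h1 (le_of_lt hp)
    · rintro ⟨c, ⟨hcq, hc0, hc2⟩, rfl⟩
      refine ⟨(mul_lt_mul_iff_right₀ hp).mpr hcq, ⟨by positivity, ?_⟩, ⟨c, rfl⟩⟩
      have h1 : p * (2 * c) < p * (q - 3 * b) := (mul_lt_mul_iff_right₀ hp).mpr hc2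
      rw [Nat.mul_sub] at h1
      calc 2 * (p * c) = p * (2 * c) := by ring
      _ < p * q - p * (3 * b) := h1
      _ = p * q - 3 * (p * b) := by ring_nf
  rw [himg, Finset.sum_image (fun x _ y _ h => Nat.eq_of_mul_eq_mul_left hp h),
    Finset.mul_sum]
  push_cast
  rfl

lemma aux_outer_img (p q : ℕ) (hp : 0 < p) :
    ((range (p * q)).filter (fun a => 0 < a ∧ 3 * a < p * q)).filter (fun a => p ∣ a)
    = ((range q).filter (fun a => 0 < a ∧ 3 * a < q)).image (fun a => p * a) := by
  ext a
  simp only [mem_image, mem_filter, mem_range]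
  constructor
  · rintro ⟨⟨haq, ha0, ha3⟩, c, rfl⟩
    refine ⟨c, ⟨lt_of_mul_lt_mul_left haq (le_of_lt hp), ?_, ?_⟩, rfl⟩
    · rcases Nat.eq_zero_or_pos c with h | h
      · simp [h] at ha0
      · exact h
    · have h1 : p * (3 * c) < p * q := by
        calc p * (3 * c) = 3 * (p * c) := by ring
        _ < p * q := ha3
      exact lt_of_mul_lt_mul_left h1 (le_of_lt hp)
  · rintro ⟨c, ⟨hcq, hc0, hc3⟩, rfl⟩
    refine ⟨⟨(mul_lt_mul_iff_right₀ hp).mpr hcq, by positivity, ?_⟩, ⟨c, rfl⟩⟩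
    calc 3 * (p * c) = p * (3 * c) := by ring
    _ < p * q := (mul_lt_mul_iff_right₀ hp).mpr hc3

theorem stmt_14 (p m : ℕ) (hp : p.Prime) (hm : 1 ≤ m) :
    (∑ a ∈ (Finset.range (p ^ m)).filter (fun a => 0 < a ∧ 3 * a < p ^ m),
      ∑ k ∈ (Finset.range (p ^ m)).filter
        (fun k => 0 < k ∧ 2 * k < p ^ m - 3 * a ∧ Nat.gcd (Nat.gcd a k) (p ^ m) = 1), (k : ℤ)) =
    (∑ a ∈ (Finset.range (p ^ m)).filter (fun a => 0 < a ∧ 3 * a < p ^ m),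
      ∑ k ∈ (Finset.range (p ^ m)).filter
        (fun k => 0 < k ∧ 2 * k < p ^ m - 3 * a), (k : ℤ)) -
    (p : ℤ) *
    (∑ a ∈ (Finset.range (p ^ (m - 1))).filter (fun a => 0 < a ∧ 3 * a < p ^ (m - 1)),
      ∑ k ∈ (Finset.range (p ^ (m - 1))).filter
        (fun k => 0 < k ∧ 2 * k < p ^ (m - 1) - 3 * a), (k : ℤ)) := by
  obtain ⟨m', rfl⟩ : ∃ m', m = m' + 1 := ⟨m - 1, by omega⟩
  have hp0 : 0 < p := hp.pos
  -- coprimality characterization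
  have hq : p ^ (m' + 1) = p * p ^ m' := pow_succ' p m'
  have hgcd : ∀ a k : ℕ, Nat.gcd (Nat.gcd a k) (p * p ^ m') = 1 ↔ ¬ (p ∣ a ∧ p ∣ k) := by
    intro a k
    rw [← hq]
    have h1 : Nat.Coprime (Nat.gcd a k) (p ^ (m' + 1)) ↔ Nat.Coprime (Nat.gcd a k) p :=
      Nat.coprime_pow_right_iff (Nat.succ_pos m') _ _
    refine h1.trans ?_
    rw [Nat.coprime_comm, hp.coprime_iff_not_dvd]
    exact not_congr Nat.dvd_gcd_iff
  have hmm : m' + 1 - 1 = m' := by omega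
  rw [hmm, hq]
  set q := p ^ m' with hqdef
  -- split each inner sum
  have split : ∀ a : ℕ,
      (∑ k ∈ (range (p * q)).filter (fun k => 0 < k ∧ 2 * k < p * q - 3 * a), (k : ℤ))
      = (∑ k ∈ (range (p * q)).filter
          (fun k => 0 < k ∧ 2 * k < p * q - 3 * a ∧ Nat.gcd (Nat.gcd a k) (p * q) = 1), (k : ℤ))
      + (∑ k ∈ (range (p * q)).filter
          (fun k => (0 < k ∧ 2 * k < p * q - 3 * a) ∧ (p ∣ a ∧ p ∣ k)), (k : ℤ)) := by
    intro a
    rw [← Finset.sum_filter_add_sum_filter_not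
      ((range (p * q)).filter (fun k => 0 < k ∧ 2 * k < p * q - 3 * a))
      (fun k => Nat.gcd (Nat.gcd a k) (p * q) = 1)]
    congr 1
    · rw [Finset.filter_filter]
      refine Finset.sum_congr ?_ (fun _ _ => rfl)
      apply Finset.filter_congr
      intro k _
      tauto
    · rw [Finset.filter_filter]
      refine Finset.sum_congr ?_ (fun _ _ => rfl)
      apply Finset.filter_congr
      intro k _
      simp only [hgcd, not_not, eq_iff_iff]
  rw [eq_sub_iff_add_eq]
  have hC : (∑ a ∈ (range (p * q)).filter (fun a => 0 < a ∧ 3 * a < p * q),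
      ∑ k ∈ (range (p * q)).filter
        (fun k => (0 < k ∧ 2 * k < p * q - 3 * a) ∧ (p ∣ a ∧ p ∣ k)), (k : ℤ))
      = p * (∑ a ∈ (range q).filter (fun a => 0 < a ∧ 3 * a < q),
          ∑ k ∈ (range q).filter (fun k => 0 < k ∧ 2 * k < q - 3 * a), (k : ℤ)) := by
    have step1 : (∑ a ∈ (range (p * q)).filter (fun a => 0 < a ∧ 3 * a < p * q),
        ∑ k ∈ (range (p * q)).filter
          (fun k => (0 < k ∧ 2 * k < p * q - 3 * a) ∧ (p ∣ a ∧ p ∣ k)), (k : ℤ))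
        = ∑ a ∈ (((range (p * q)).filter (fun a => 0 < a ∧ 3 * a < p * q)).filter
            (fun a => p ∣ a)),
          ∑ k ∈ (range (p * q)).filter
            (fun k => (0 < k ∧ 2 * k < p * q - 3 * a) ∧ p ∣ k), (k : ℤ) := by
      conv_rhs => rw [Finset.sum_filter]
      refine Finset.sum_congr rfl (fun a _ => ?_)
      by_cases h : p ∣ a
      · simp [h]
      · simp [h]
    rw [step1, aux_outer_img p q hp0,
      Finset.sum_image (fun x _ y _ h => Nat.eq_of_mul_eq_mul_left hp0 h)]
    rw [Finset.mul_sum]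
    exact Finset.sum_congr rfl (fun b _ => aux_inner_sum p q b hp0)
  rw [← hC, ← Finset.sum_add_distrib]
  exact Finset.sum_congr rfl (fun a _ => (split a).symm)
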